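/- For every real a with 0.99 ≤ a ≤ 1, one has h₁(a) ≥ 0.83, where h₁(a) = (1 - (2·arccos(a) + arccos(2a-1))/(2π))/a. -/
import Mathlib

/-- `h₁(a) = (1 - (2·arccos a + arccos(2a-1))/(2π))/a`. -/
noncomputable def h₁ (a : ℝ) : ℝ :=
  (1 - (2 * Real.arccos a + Real.arccos (2 * a - 1)) / (2 * Real.pi)) / a

lemma arccos_le_pi_mul_sqrt (x : ℝ) (hx : -1 ≤ x) (hx1 : x ≤ 1) :
    Real.arccos x ≤ Real.pi * Real.sqrt ((1 - x) / 2) := by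
  set t := Real.arccos x with ht
  have ht0 : 0 ≤ t := Real.arccos_nonneg x
  have htpi : t ≤ Real.pi := Real.arccos_le_pi x
  have hcos : Real.cos t = x := Real.cos_arccos hx hx1
  have hb : Real.cos t ≤ 1 - 2 / Real.pi ^ 2 * t ^ 2 :=
    Real.cos_le_one_sub_mul_cos_sq (by rw [abs_of_nonneg ht0]; exact htpi)
  have hpipos : (0 : ℝ) < Real.pi := Real.pi_pos
  have hsq : t ^ 2 ≤ Real.pi ^ 2 * ((1 - x) / 2) := by
    rw [hcos] at hb
    have hπ2 : (0 : ℝ) < Real.pi ^ 2 := by positivity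
    have h2 : 2 * t ^ 2 / Real.pi ^ 2 ≤ 1 - x := by rw [div_mul_eq_mul_div] at hb; linarith
    rw [div_le_iff₀ hπ2] at h2
    nlinarith
  calc t = Real.sqrt (t ^ 2) := by rw [Real.sqrt_sq ht0]
    _ ≤ Real.sqrt (Real.pi ^ 2 * ((1 - x) / 2)) := Real.sqrt_le_sqrt hsq
    _ = Real.pi * Real.sqrt ((1 - x) / 2) := by
        rw [Real.sqrt_mul (by positivity), Real.sqrt_sq hpipos.le]

/-- For `0.99 ≤ a ≤ 1`, `h₁(a) ≥ 0.83`. -/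
theorem stmt18 (a : ℝ) (h0 : (0.99 : ℝ) ≤ a) (h1 : a ≤ 1) : h₁ a ≥ (0.83 : ℝ) := by
  have hpipos : (0 : ℝ) < Real.pi := Real.pi_pos
  have ha1 : Real.arccos a ≤ Real.pi * Real.sqrt ((1 - a) / 2) :=
    arccos_le_pi_mul_sqrt a (by linarith) h1
  have ha2 : Real.arccos (2 * a - 1) ≤ Real.pi * Real.sqrt ((1 - (2 * a - 1)) / 2) :=
    arccos_le_pi_mul_sqrt (2 * a - 1) (by linarith) (by linarith)
  have hs1 : Real.sqrt ((1 - a) / 2) ≤ 0.0708 := by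
    rw [show (0.0708 : ℝ) = Real.sqrt (0.0708 ^ 2) by rw [Real.sqrt_sq]; norm_num]
    exact Real.sqrt_le_sqrt (by nlinarith)
  have hs2 : Real.sqrt ((1 - (2 * a - 1)) / 2) ≤ 0.1 := by
    rw [show (0.1 : ℝ) = Real.sqrt (0.1 ^ 2) by rw [Real.sqrt_sq]; norm_num]
    exact Real.sqrt_le_sqrt (by nlinarith)
  have hS : 2 * Real.arccos a + Real.arccos (2 * a - 1) ≤ 0.2416 * Real.pi := by
    nlinarith
  have hdiv : (2 * Real.arccos a + Real.arccos (2 * a - 1)) / (2 * Real.pi) ≤ 0.1208 := by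
    rw [div_le_iff₀ (by positivity)]
    linarith
  unfold h₁
  rw [ge_iff_le, le_div_iff₀ (by linarith : (0:ℝ) < a)]
  nlinarith
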